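/- Let m ≥ 2 and let A, B be complex random samples as in the context with 𝔼[A] = 𝔼[B] = 0 and 𝔼[AB] = 0 (but 𝔼[A·conj(B)] possibly nonzero). Then the estimator c₄⁽ᶜᵇ⁾ = ( (m+1)·\overline{|A|²|B|²} − m·( \overline{|A|²}·\overline{|B|²} + \overline{A·conj(B)}·\overline{conj(A)·B} ) ) / (m−1) satisfies 𝔼[c₄⁽ᶜᵇ⁾] = 𝔼[|A|²|B|²] − 𝔼[|A|²]𝔼[|B|²] − 𝔼[A·conj(B)]·𝔼[conj(A)·B], which under the stated conditions equals the fourth cumulant C₄(a, a*, b, b*). -/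

import Mathlib

open MeasureTheory ProbabilityTheory

noncomputable def cum4 {Ω : Type*} [MeasurableSpace Ω] (μ : MeasureTheory.Measure Ω)
    (x y z w : Ω → ℂ) : ℂ :=
  (∫ ω, x ω * y ω * z ω * w ω ∂μ)
  - (∫ ω, x ω * y ω * z ω ∂μ) * (∫ ω, w ω ∂μ)
  - (∫ ω, x ω * y ω * w ω ∂μ) * (∫ ω, z ω ∂μ)
  - (∫ ω, x ω * z ω * w ω ∂μ) * (∫ ω, y ω ∂μ)
  - (∫ ω, y ω * z ω * w ω ∂μ) * (∫ ω, x ω ∂μ)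
  - (∫ ω, x ω * y ω ∂μ) * (∫ ω, z ω * w ω ∂μ)
  - (∫ ω, x ω * z ω ∂μ) * (∫ ω, y ω * w ω ∂μ)
  - (∫ ω, x ω * w ω ∂μ) * (∫ ω, y ω * z ω ∂μ)
  + 2 * (∫ ω, x ω * y ω ∂μ) * (∫ ω, z ω ∂μ) * (∫ ω, w ω ∂μ)
  + 2 * (∫ ω, x ω * z ω ∂μ) * (∫ ω, y ω ∂μ) * (∫ ω, w ω ∂μ)
  + 2 * (∫ ω, x ω * w ω ∂μ) * (∫ ω, y ω ∂μ) * (∫ ω, z ω ∂μ)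
  + 2 * (∫ ω, y ω * z ω ∂μ) * (∫ ω, x ω ∂μ) * (∫ ω, w ω ∂μ)
  + 2 * (∫ ω, y ω * w ω ∂μ) * (∫ ω, x ω ∂μ) * (∫ ω, z ω ∂μ)
  + 2 * (∫ ω, z ω * w ω ∂μ) * (∫ ω, x ω ∂μ) * (∫ ω, y ω ∂μ)
  - 6 * (∫ ω, x ω ∂μ) * (∫ ω, y ω ∂μ) * (∫ ω, z ω ∂μ) * (∫ ω, w ω ∂μ)

open scoped ENNReal

section Helpers

variable {Ω : Type*} [MeasurableSpace Ω] {μ : Measure Ω}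

private lemma memLp_conj {f : Ω → ℂ} {p : ℝ≥0∞} (hf : MemLp f p μ) :
    MemLp (fun ω => (starRingEnd ℂ) (f ω)) p μ := by
  refine ⟨RCLike.continuous_conj.comp_aestronglyMeasurable hf.1, ?_⟩
  have h : eLpNorm (fun ω => (starRingEnd ℂ) (f ω)) p μ = eLpNorm f p μ :=
    eLpNorm_congr_norm_ae (Filter.Eventually.of_forall fun ω => by simp)
  exact h ▸ hf.2

private lemma memLp_mul {f g : Ω → ℂ} {p q r : ℝ≥0∞} (hf : MemLp f q μ) (hg : MemLp g r μ)
    (h : 1/p = 1/q + 1/r) : MemLp (fun ω => f ω * g ω) p μ := by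
  simpa [smul_eq_mul, Pi.mul_def] using hg.smul hf (hpqr := ⟨by simpa [one_div] using h.symm⟩)

private lemma ennreal_half : (1:ℝ≥0∞)/2 = 1/4 + 1/4 := by
  rw [ENNReal.div_add_div_same, ENNReal.div_eq_div_iff] <;> norm_num

private lemma ennreal_one : (1:ℝ≥0∞)/1 = 1/2 + 1/2 := by
  rw [ENNReal.div_add_div_same, ENNReal.div_eq_div_iff] <;> norm_num

private lemma indep_integral_mul {X Y : Ω → ℂ} (h : IndepFun X Y μ) (hX : Integrable X μ)
    (hY : Integrable Y μ) : ∫ ω, X ω * Y ω ∂μ = (∫ ω, X ω ∂μ) * ∫ ω, Y ω ∂μ := by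
  have hXY : Integrable (fun ω => X ω * Y ω) μ := h.integrable_mul hX hY
  have hrr : IndepFun (fun ω => (X ω).re) (fun ω => (Y ω).re) μ :=
    h.comp Complex.measurable_re Complex.measurable_re
  have hri : IndepFun (fun ω => (X ω).re) (fun ω => (Y ω).im) μ :=
    h.comp Complex.measurable_re Complex.measurable_im
  have hir : IndepFun (fun ω => (X ω).im) (fun ω => (Y ω).re) μ :=
    h.comp Complex.measurable_im Complex.measurable_re
  have hii : IndepFun (fun ω => (X ω).im) (fun ω => (Y ω).im) μ :=
    h.comp Complex.measurable_im Complex.measurable_im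
  have hXr : Integrable (fun ω => (X ω).re) μ := hX.re
  have hXi : Integrable (fun ω => (X ω).im) μ := hX.im
  have hYr : Integrable (fun ω => (Y ω).re) μ := hY.re
  have hYi : Integrable (fun ω => (Y ω).im) μ := hY.im
  have h1 : ∫ ω, (X ω * Y ω).re ∂μ = (∫ ω, X ω * Y ω ∂μ).re := by
    simpa [RCLike.re_to_complex] using integral_re hXY
  have h2 : ∫ ω, (X ω * Y ω).im ∂μ = (∫ ω, X ω * Y ω ∂μ).im := by
    simpa [RCLike.im_to_complex] using integral_im hXY
  have hXre : ∫ ω, (X ω).re ∂μ = (∫ ω, X ω ∂μ).re := by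
    simpa [RCLike.re_to_complex] using integral_re hX
  have hXim : ∫ ω, (X ω).im ∂μ = (∫ ω, X ω ∂μ).im := by
    simpa [RCLike.im_to_complex] using integral_im hX
  have hYre : ∫ ω, (Y ω).re ∂μ = (∫ ω, Y ω ∂μ).re := by
    simpa [RCLike.re_to_complex] using integral_re hY
  have hYim : ∫ ω, (Y ω).im ∂μ = (∫ ω, Y ω ∂μ).im := by
    simpa [RCLike.im_to_complex] using integral_im hY
  apply Complex.ext
  · rw [Complex.mul_re, ← hXre, ← hXim, ← hYre, ← hYim, ← h1]
    simp_rw [Complex.mul_re]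
    rw [integral_sub
        (show Integrable (fun ω => (X ω).re * (Y ω).re) μ from hrr.integrable_mul hXr hYr)
        (show Integrable (fun ω => (X ω).im * (Y ω).im) μ from hii.integrable_mul hXi hYi),
      hrr.integral_fun_mul_eq_mul_integral hXr.1 hYr.1, hii.integral_fun_mul_eq_mul_integral hXi.1 hYi.1]
  · rw [Complex.mul_im, ← hXre, ← hXim, ← hYre, ← hYim, ← h2]
    simp_rw [Complex.mul_im]
    rw [integral_add
        (show Integrable (fun ω => (X ω).re * (Y ω).im) μ from hri.integrable_mul hXr hYi)
        (show Integrable (fun ω => (X ω).im * (Y ω).re) μ from hir.integrable_mul hXi hYr),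
      hri.integral_fun_mul_eq_mul_integral hXr.1 hYi.1, hir.integral_fun_mul_eq_mul_integral hXi.1 hYr.1]

private lemma aux_main (μ : Measure Ω) [IsProbabilityMeasure μ] (m : ℕ) (hm : 2 ≤ m)
    (P Q R S : Fin m → Ω → ℂ) (EX EP EQ ER ES : ℂ)
    (hPQint : ∀ i j, Integrable (fun ω => P i ω * Q j ω) μ)
    (hRSint : ∀ i j, Integrable (fun ω => R i ω * S j ω) μ)
    (hdiagPQ : ∀ i, ∫ ω, P i ω * Q i ω ∂μ = EX)
    (hdiagRS : ∀ i, ∫ ω, R i ω * S i ω ∂μ = EX)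
    (hoffPQ : ∀ i j, i ≠ j → ∫ ω, P i ω * Q j ω ∂μ = EP * EQ)
    (hoffRS : ∀ i j, i ≠ j → ∫ ω, R i ω * S j ω ∂μ = ER * ES) :
    (∫ ω, (((m:ℂ)+1) * ((m:ℂ)⁻¹ * ∑ i, P i ω * Q i ω)
      - (m:ℂ) * (((m:ℂ)⁻¹ * ∑ i, P i ω) * ((m:ℂ)⁻¹ * ∑ i, Q i ω)
        + ((m:ℂ)⁻¹ * ∑ i, R i ω) * ((m:ℂ)⁻¹ * ∑ i, S i ω))) / ((m:ℂ)-1) ∂μ)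
      = EX - EP * EQ - ER * ES := by
  have hmc : (m:ℂ) ≠ 0 := Nat.cast_ne_zero.mpr (by omega)
  have hm1 : (m:ℂ) - 1 ≠ 0 := sub_ne_zero.mpr (by exact_mod_cast (by omega : m ≠ 1))
  have hSX : Integrable (fun ω => ∑ i, P i ω * Q i ω) μ :=
    integrable_finset_sum _ fun i _ => hPQint i i
  have hSPQ : Integrable (fun ω => (∑ i, P i ω) * (∑ i, Q i ω)) μ := by
    have e : (fun ω => (∑ i, P i ω) * (∑ i, Q i ω))
        = fun ω => ∑ i, ∑ j, P i ω * Q j ω := by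
      funext ω; rw [Finset.sum_mul_sum]
    rw [e]; exact integrable_finset_sum _ fun i _ =>
      integrable_finset_sum _ fun j _ => hPQint i j
  have hSRS : Integrable (fun ω => (∑ i, R i ω) * (∑ i, S i ω)) μ := by
    have e : (fun ω => (∑ i, R i ω) * (∑ i, S i ω))
        = fun ω => ∑ i, ∑ j, R i ω * S j ω := by
      funext ω; rw [Finset.sum_mul_sum]
    rw [e]; exact integrable_finset_sum _ fun i _ =>
      integrable_finset_sum _ fun j _ => hRSint i j
  have hpt : ∀ ω : Ω, (((m:ℂ)+1) * ((m:ℂ)⁻¹ * ∑ i, P i ω * Q i ω)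
      - (m:ℂ) * (((m:ℂ)⁻¹ * ∑ i, P i ω) * ((m:ℂ)⁻¹ * ∑ i, Q i ω)
        + ((m:ℂ)⁻¹ * ∑ i, R i ω) * ((m:ℂ)⁻¹ * ∑ i, S i ω))) / ((m:ℂ)-1)
      = (((m:ℂ)+1) * (m:ℂ)⁻¹ * ((m:ℂ)-1)⁻¹) * (∑ i, P i ω * Q i ω)
        - ((m:ℂ) * (m:ℂ)⁻¹ * (m:ℂ)⁻¹ * ((m:ℂ)-1)⁻¹) * ((∑ i, P i ω) * (∑ i, Q i ω))
        - ((m:ℂ) * (m:ℂ)⁻¹ * (m:ℂ)⁻¹ * ((m:ℂ)-1)⁻¹) * ((∑ i, R i ω) * (∑ i, S i ω)) := by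
    intro ω; field_simp; ring
  simp_rw [hpt]
  have i2 : Integrable (fun ω => ((m:ℂ) * (m:ℂ)⁻¹ * (m:ℂ)⁻¹ * ((m:ℂ)-1)⁻¹)
      * ((∑ i, P i ω) * (∑ i, Q i ω))) μ := hSPQ.const_mul _
  have i3 : Integrable (fun ω => ((m:ℂ) * (m:ℂ)⁻¹ * (m:ℂ)⁻¹ * ((m:ℂ)-1)⁻¹)
      * ((∑ i, R i ω) * (∑ i, S i ω))) μ := hSRS.const_mul _
  have i1 : Integrable (fun ω => (((m:ℂ)+1) * (m:ℂ)⁻¹ * ((m:ℂ)-1)⁻¹) * (∑ i, P i ω * Q i ω)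
      - ((m:ℂ) * (m:ℂ)⁻¹ * (m:ℂ)⁻¹ * ((m:ℂ)-1)⁻¹) * ((∑ i, P i ω) * (∑ i, Q i ω))) μ :=
    (hSX.const_mul _).sub i2
  rw [integral_sub i1 i3, integral_sub (hSX.const_mul _) i2,
    integral_const_mul, integral_const_mul, integral_const_mul]
  have hI1 : ∫ ω, ∑ i, P i ω * Q i ω ∂μ = (m:ℂ) * EX := by
    rw [integral_finset_sum _ fun i _ => hPQint i i]
    simp [hdiagPQ, Finset.sum_const, Finset.card_univ, nsmul_eq_mul]
  have key : ∀ (F G : Fin m → Ω → ℂ) (EFG EF EG : ℂ),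
      (∀ i j, Integrable (fun ω => F i ω * G j ω) μ) →
      (∀ i, ∫ ω, F i ω * G i ω ∂μ = EFG) →
      (∀ i j, i ≠ j → ∫ ω, F i ω * G j ω ∂μ = EF * EG) →
      ∫ ω, (∑ i, F i ω) * (∑ i, G i ω) ∂μ
        = (m:ℂ) * EFG + (m:ℂ) * ((m:ℂ)-1) * (EF * EG) := by
    intro F G EFG EF EG hint hdiag hoff
    have e : (fun ω => (∑ i, F i ω) * (∑ i, G i ω))
        = fun ω => ∑ i, ∑ j, F i ω * G j ω := by
      funext ω; rw [Finset.sum_mul_sum]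
    rw [e, integral_finset_sum _ fun i _ =>
      integrable_finset_sum _ fun j _ => hint i j]
    have h1 : ∀ i : Fin m, ∫ ω, ∑ j, F i ω * G j ω ∂μ
        = EFG + ((m:ℂ)-1) * (EF * EG) := by
      intro i
      rw [integral_finset_sum _ fun j _ => hint i j]
      have h2 : ∀ j : Fin m, (∫ ω, F i ω * G j ω ∂μ)
          = EF * EG + (if i = j then EFG - EF * EG else 0) := by
        intro j
        by_cases hij : i = j
        · subst hij; simp [hdiag i]
        · simp [hij, hoff i j hij]
      simp_rw [h2]
      rw [Finset.sum_add_distrib, Finset.sum_const, Finset.sum_ite_eq,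
        Finset.card_univ, Fintype.card_fin]
      simp only [Finset.mem_univ, if_true, nsmul_eq_mul]
      ring
    rw [Finset.sum_congr rfl fun i _ => h1 i, Finset.sum_const,
      Finset.card_univ, Fintype.card_fin, nsmul_eq_mul]
    ring
  rw [hI1, key P Q EX EP EQ hPQint hdiagPQ hoffPQ, key R S EX ER ES hRSint hdiagRS hoffRS]
  field_simp
  ring

private lemma part1 (μ : Measure Ω) [IsProbabilityMeasure μ]
    (m : ℕ) (hm : 2 ≤ m) (z : Fin m) (A B : Fin m → Ω → ℂ)
    (hindep : iIndepFun (fun i ω => (A i ω, B i ω)) μ)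
    (hident : ∀ i, IdentDistrib (fun ω => (A i ω, B i ω)) (fun ω => (A z ω, B z ω)) μ μ)
    (hA : MemLp (A z) 4 μ) (hB : MemLp (B z) 4 μ) :
    (∫ ω, (((m:ℂ)+1) * ((m:ℂ)⁻¹ * ∑ i, A i ω * (starRingEnd ℂ) (A i ω) * (B i ω * (starRingEnd ℂ) (B i ω)))
      - (m:ℂ) * (((m:ℂ)⁻¹ * ∑ i, A i ω * (starRingEnd ℂ) (A i ω)) * ((m:ℂ)⁻¹ * ∑ i, B i ω * (starRingEnd ℂ) (B i ω))
        + ((m:ℂ)⁻¹ * ∑ i, A i ω * (starRingEnd ℂ) (B i ω)) * ((m:ℂ)⁻¹ * ∑ i, (starRingEnd ℂ) (A i ω) * B i ω))) / ((m:ℂ)-1) ∂μ)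
    = (∫ ω, A z ω * (starRingEnd ℂ) (A z ω) * (B z ω * (starRingEnd ℂ) (B z ω)) ∂μ)
      - (∫ ω, A z ω * (starRingEnd ℂ) (A z ω) ∂μ) * (∫ ω, B z ω * (starRingEnd ℂ) (B z ω) ∂μ)
      - (∫ ω, A z ω * (starRingEnd ℂ) (B z ω) ∂μ) * (∫ ω, (starRingEnd ℂ) (A z ω) * B z ω ∂μ) := by
  have hconj : Measurable fun w : ℂ => (starRingEnd ℂ) w := RCLike.continuous_conj.measurable
  have hgP : Measurable fun p : ℂ × ℂ => p.1 * (starRingEnd ℂ) p.1 :=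
    measurable_fst.mul (hconj.comp measurable_fst)
  have hgQ : Measurable fun p : ℂ × ℂ => p.2 * (starRingEnd ℂ) p.2 :=
    measurable_snd.mul (hconj.comp measurable_snd)
  have hgR : Measurable fun p : ℂ × ℂ => p.1 * (starRingEnd ℂ) p.2 :=
    measurable_fst.mul (hconj.comp measurable_snd)
  have hgS : Measurable fun p : ℂ × ℂ => (starRingEnd ℂ) p.1 * p.2 :=
    (hconj.comp measurable_fst).mul measurable_snd
  have hgX : Measurable fun p : ℂ × ℂ => p.1 * (starRingEnd ℂ) p.1 * (p.2 * (starRingEnd ℂ) p.2) :=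
    hgP.mul hgQ
  have hA4 : ∀ i, MemLp (A i) 4 μ := fun i =>
    (((hident i).comp measurable_fst).memLp_iff).mpr hA
  have hB4 : ∀ i, MemLp (B i) 4 μ := fun i =>
    (((hident i).comp measurable_snd).memLp_iff).mpr hB
  have hP2 : ∀ i, MemLp (fun ω => A i ω * (starRingEnd ℂ) (A i ω)) 2 μ := fun i =>
    memLp_mul (hA4 i) (memLp_conj (hA4 i)) ennreal_half
  have hQ2 : ∀ i, MemLp (fun ω => B i ω * (starRingEnd ℂ) (B i ω)) 2 μ := fun i =>
    memLp_mul (hB4 i) (memLp_conj (hB4 i)) ennreal_half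
  have hR2 : ∀ i, MemLp (fun ω => A i ω * (starRingEnd ℂ) (B i ω)) 2 μ := fun i =>
    memLp_mul (hA4 i) (memLp_conj (hB4 i)) ennreal_half
  have hS2 : ∀ i, MemLp (fun ω => (starRingEnd ℂ) (A i ω) * B i ω) 2 μ := fun i =>
    memLp_mul (memLp_conj (hA4 i)) (hB4 i) ennreal_half
  have hPint : ∀ i, Integrable (fun ω => A i ω * (starRingEnd ℂ) (A i ω)) μ := fun i =>
    (hP2 i).integrable one_le_two
  have hQint : ∀ i, Integrable (fun ω => B i ω * (starRingEnd ℂ) (B i ω)) μ := fun i =>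
    (hQ2 i).integrable one_le_two
  have hRint : ∀ i, Integrable (fun ω => A i ω * (starRingEnd ℂ) (B i ω)) μ := fun i =>
    (hR2 i).integrable one_le_two
  have hSint : ∀ i, Integrable (fun ω => (starRingEnd ℂ) (A i ω) * B i ω) μ := fun i =>
    (hS2 i).integrable one_le_two
  have hPQint : ∀ i j, Integrable (fun ω => (A i ω * (starRingEnd ℂ) (A i ω)) * (B j ω * (starRingEnd ℂ) (B j ω))) μ :=
    fun i j => (memLp_mul (hP2 i) (hQ2 j) ennreal_one).integrable le_rfl
  have hRSint : ∀ i j, Integrable (fun ω => (A i ω * (starRingEnd ℂ) (B i ω)) * ((starRingEnd ℂ) (A j ω) * B j ω)) μ :=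
    fun i j => (memLp_mul (hR2 i) (hS2 j) ennreal_one).integrable le_rfl
  have hEPi : ∀ i, (∫ ω, A i ω * (starRingEnd ℂ) (A i ω) ∂μ) = ∫ ω, A z ω * (starRingEnd ℂ) (A z ω) ∂μ :=
    fun i => ((hident i).comp hgP).integral_eq
  have hEQi : ∀ i, (∫ ω, B i ω * (starRingEnd ℂ) (B i ω) ∂μ) = ∫ ω, B z ω * (starRingEnd ℂ) (B z ω) ∂μ :=
    fun i => ((hident i).comp hgQ).integral_eq
  have hERi : ∀ i, (∫ ω, A i ω * (starRingEnd ℂ) (B i ω) ∂μ) = ∫ ω, A z ω * (starRingEnd ℂ) (B z ω) ∂μ :=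
    fun i => ((hident i).comp hgR).integral_eq
  have hESi : ∀ i, (∫ ω, (starRingEnd ℂ) (A i ω) * B i ω ∂μ) = ∫ ω, (starRingEnd ℂ) (A z ω) * B z ω ∂μ :=
    fun i => ((hident i).comp hgS).integral_eq
  have hdiagPQ : ∀ i, (∫ ω, (A i ω * (starRingEnd ℂ) (A i ω)) * (B i ω * (starRingEnd ℂ) (B i ω)) ∂μ)
      = ∫ ω, A z ω * (starRingEnd ℂ) (A z ω) * (B z ω * (starRingEnd ℂ) (B z ω)) ∂μ :=
    fun i => ((hident i).comp hgX).integral_eq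
  have hdiagRS : ∀ i, (∫ ω, (A i ω * (starRingEnd ℂ) (B i ω)) * ((starRingEnd ℂ) (A i ω) * B i ω) ∂μ)
      = ∫ ω, A z ω * (starRingEnd ℂ) (A z ω) * (B z ω * (starRingEnd ℂ) (B z ω)) ∂μ := by
    intro i
    calc (∫ ω, (A i ω * (starRingEnd ℂ) (B i ω)) * ((starRingEnd ℂ) (A i ω) * B i ω) ∂μ)
        = ∫ ω, A i ω * (starRingEnd ℂ) (A i ω) * (B i ω * (starRingEnd ℂ) (B i ω)) ∂μ :=
          integral_congr_ae (Filter.Eventually.of_forall fun ω => by ring)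
      _ = _ := hdiagPQ i
  have hoffPQ : ∀ i j, i ≠ j → (∫ ω, (A i ω * (starRingEnd ℂ) (A i ω)) * (B j ω * (starRingEnd ℂ) (B j ω)) ∂μ)
      = (∫ ω, A z ω * (starRingEnd ℂ) (A z ω) ∂μ) * ∫ ω, B z ω * (starRingEnd ℂ) (B z ω) ∂μ := by
    intro i j hij
    have hind : IndepFun (fun ω => A i ω * (starRingEnd ℂ) (A i ω)) (fun ω => B j ω * (starRingEnd ℂ) (B j ω)) μ :=
      (hindep.indepFun hij).comp hgP hgQ
    rw [indep_integral_mul hind (hPint i) (hQint j), hEPi i, hEQi j]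
  have hoffRS : ∀ i j, i ≠ j → (∫ ω, (A i ω * (starRingEnd ℂ) (B i ω)) * ((starRingEnd ℂ) (A j ω) * B j ω) ∂μ)
      = (∫ ω, A z ω * (starRingEnd ℂ) (B z ω) ∂μ) * ∫ ω, (starRingEnd ℂ) (A z ω) * B z ω ∂μ := by
    intro i j hij
    have hind : IndepFun (fun ω => A i ω * (starRingEnd ℂ) (B i ω)) (fun ω => (starRingEnd ℂ) (A j ω) * B j ω) μ :=
      (hindep.indepFun hij).comp hgR hgS
    rw [indep_integral_mul hind (hRint i) (hSint j), hERi i, hESi j]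
  exact aux_main μ m hm
    (fun i ω => A i ω * (starRingEnd ℂ) (A i ω)) (fun i ω => B i ω * (starRingEnd ℂ) (B i ω))
    (fun i ω => A i ω * (starRingEnd ℂ) (B i ω)) (fun i ω => (starRingEnd ℂ) (A i ω) * B i ω)
    _ _ _ _ _ hPQint hRSint hdiagPQ hdiagRS hoffPQ hoffRS

private lemma part2 (μ : Measure Ω) [IsProbabilityMeasure μ]
    (m : ℕ) (z : Fin m) (A B : Fin m → Ω → ℂ)
    (hEA : (∫ ω, A z ω ∂μ) = 0) (hEB : (∫ ω, B z ω ∂μ) = 0)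
    (hEAB : (∫ ω, A z ω * B z ω ∂μ) = 0) :
    (∫ ω, A z ω * (starRingEnd ℂ) (A z ω) * (B z ω * (starRingEnd ℂ) (B z ω)) ∂μ)
      - (∫ ω, A z ω * (starRingEnd ℂ) (A z ω) ∂μ) * (∫ ω, B z ω * (starRingEnd ℂ) (B z ω) ∂μ)
      - (∫ ω, A z ω * (starRingEnd ℂ) (B z ω) ∂μ) * (∫ ω, (starRingEnd ℂ) (A z ω) * B z ω ∂μ)
      = cum4 μ (A z) (fun ω => (starRingEnd ℂ) (A z ω)) (B z) (fun ω => (starRingEnd ℂ) (B z ω)) := by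
  have hca : (∫ ω, (starRingEnd ℂ) (A z ω) ∂μ) = 0 := by
    rw [integral_conj, hEA, map_zero]
  have hcb : (∫ ω, (starRingEnd ℂ) (B z ω) ∂μ) = 0 := by
    rw [integral_conj, hEB, map_zero]
  have hcab : (∫ ω, (starRingEnd ℂ) (A z ω) * (starRingEnd ℂ) (B z ω) ∂μ) = 0 := by
    have h : (∫ ω, (starRingEnd ℂ) (A z ω * B z ω) ∂μ) = 0 := by
      rw [integral_conj, hEAB, map_zero]
    simpa [map_mul] using h
  have hassoc : (∫ ω, A z ω * (starRingEnd ℂ) (A z ω) * (B z ω * (starRingEnd ℂ) (B z ω)) ∂μ)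
      = ∫ ω, A z ω * (starRingEnd ℂ) (A z ω) * B z ω * (starRingEnd ℂ) (B z ω) ∂μ :=
    integral_congr_ae (Filter.Eventually.of_forall fun ω => by ring)
  simp only [cum4]
  rw [hEA, hEB, hca, hcb, hEAB, hcab, hassoc]
  ring

end Helpers

theorem unbiased_c4_cb {Ω : Type*} [MeasurableSpace Ω] (μ : Measure Ω) [IsProbabilityMeasure μ]
    (m : ℕ) (hm : 2 ≤ m)
    (A B : Fin m → Ω → ℂ)
    (hAmeas : ∀ i, Measurable (A i))
    (hBmeas : ∀ i, Measurable (B i))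
    (hindep : iIndepFun (fun i ω => (A i ω, B i ω)) μ)
    (hident : ∀ i, IdentDistrib (fun ω => (A i ω, B i ω)) (fun ω => (A ⟨0, by omega⟩ ω, B ⟨0, by omega⟩ ω)) μ μ)
    (hA : MemLp (A ⟨0, by omega⟩) 4 μ)
    (hB : MemLp (B ⟨0, by omega⟩) 4 μ)
    (hEA : (∫ ω, A ⟨0, by omega⟩ ω ∂μ) = 0) (hEB : (∫ ω, B ⟨0, by omega⟩ ω ∂μ) = 0)
    (hEAB : (∫ ω, A ⟨0, by omega⟩ ω * B ⟨0, by omega⟩ ω ∂μ) = 0) :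
    (∫ ω, (((m:ℂ)+1) * ((m:ℂ)⁻¹ * ∑ i, A i ω * (starRingEnd ℂ) (A i ω) * (B i ω * (starRingEnd ℂ) (B i ω))) - (m:ℂ) * (((m:ℂ)⁻¹ * ∑ i, A i ω * (starRingEnd ℂ) (A i ω)) * ((m:ℂ)⁻¹ * ∑ i, B i ω * (starRingEnd ℂ) (B i ω)) + ((m:ℂ)⁻¹ * ∑ i, A i ω * (starRingEnd ℂ) (B i ω)) * ((m:ℂ)⁻¹ * ∑ i, (starRingEnd ℂ) (A i ω) * B i ω))) / ((m:ℂ)-1) ∂μ) = (∫ ω, A ⟨0, by omega⟩ ω * (starRingEnd ℂ) (A ⟨0, by omega⟩ ω) * (B ⟨0, by omega⟩ ω * (starRingEnd ℂ) (B ⟨0, by omega⟩ ω)) ∂μ) - (∫ ω, A ⟨0, by omega⟩ ω * (starRingEnd ℂ) (A ⟨0, by omega⟩ ω) ∂μ) * (∫ ω, B ⟨0, by omega⟩ ω * (starRingEnd ℂ) (B ⟨0, by omega⟩ ω) ∂μ) - (∫ ω, A ⟨0, by omega⟩ ω * (starRingEnd ℂ) (B ⟨0, by omega⟩ ω) ∂μ)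 * (∫ ω, (starRingEnd ℂ) (A ⟨0, by omega⟩ ω) * B ⟨0, by omega⟩ ω ∂μ) ∧
    (∫ ω, A ⟨0, by omega⟩ ω * (starRingEnd ℂ) (A ⟨0, by omega⟩ ω) * (B ⟨0, by omega⟩ ω * (starRingEnd ℂ) (B ⟨0, by omega⟩ ω)) ∂μ) - (∫ ω, A ⟨0, by omega⟩ ω * (starRingEnd ℂ) (A ⟨0, by omega⟩ ω) ∂μ) * (∫ ω, B ⟨0, by omega⟩ ω * (starRingEnd ℂ) (B ⟨0, by omega⟩ ω) ∂μ) - (∫ ω, A ⟨0, by omega⟩ ω * (starRingEnd ℂ) (B ⟨0, by omega⟩ ω) ∂μ) * (∫ ω, (starRingEnd ℂ) (A ⟨0, by omega⟩ ω) * B ⟨0, by omega⟩ ω ∂μ) = cum4 μ (A ⟨0, by omega⟩) (fun ω => (starRingEnd ℂ) (A ⟨0, by omega⟩ ω)) (B ⟨0, by omega⟩) (fun ω => (starRingEnd ℂ) (B ⟨0, by omega⟩ ω)) := by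
    exact ⟨part1 μ m hm ⟨0, by omega⟩ A B hindep hident hA hB,
    part2 μ m ⟨0, by omega⟩ A B hEA hEB hEAB⟩
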